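/- arXiv:2604.15274 — 7 statements merged into one kernel-verified Lean document; each statement's English description precedes it below -/
import Mathlib

section
/- For every mixed graph G without directed cycles, if G contains a directed path with ℓ+1 vertices (i.e., of length ℓ), then any two distinct vertices on this path have different mixed neighborhood types; consequently the mixed neighborhood diversity of G is at least ℓ+1. -/
structure MixedGraph (V : Type) where
  Edge : V → V → Prop
  Arc : V → V → Prop
  edge_symm : ∀ u v, Edge u v → Edge v u
  edge_irrefl : ∀ v, ¬ Edge v v
  arc_irrefl : ∀ v, ¬ Arc v v
  not_edge_arc : ∀ u v, Arc u v → ¬ Edge u v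

namespace MixedGraph

variable {V : Type}

/-- No directed cycles: the arc relation has no nontrivial closed walks. -/
def Acyclic (G : MixedGraph V) : Prop := ∀ v, ¬ Relation.TransGen G.Arc v v

def Nminus (G : MixedGraph V) (v : V) : Set V := {u | G.Arc u v}
def Nplus (G : MixedGraph V) (v : V) : Set V := {u | G.Arc v u}
def Nu (G : MixedGraph V) (v : V) : Set V := {u | G.Edge u v}

/-- Two vertices have the same mixed neighborhood type. -/
def SameType (G : MixedGraph V) (u v : V) : Prop :=
  G.Nminus u = G.Nminus v ∧ G.Nplus u = G.Nplus v ∧ G.Nu u \ {v} = G.Nu v \ {u}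

/-- Mixed neighborhood diversity: the number of mixed types. -/
noncomputable def ndm (G : MixedGraph V) : ℕ := Nat.card (Quot G.SameType)

/-- The underlying undirected graph: arcs become edges. -/
def underlying (G : MixedGraph V) : SimpleGraph V where
  Adj u v := G.Edge u v ∨ G.Arc u v ∨ G.Arc v u
  symm := by
    constructor
    intro u v h
    rcases h with h | h | h
    · exact Or.inl (G.edge_symm u v h)
    · exact Or.inr (Or.inr h)
    · exact Or.inr (Or.inl h)
  loopless := by
    constructor
    intro v h
    rcases h with h | h | h
    · exact G.edge_irrefl v h
    · exact G.arc_irrefl v h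
    · exact G.arc_irrefl v h

/-- Same type in the underlying undirected graph. -/
def USameType (G : MixedGraph V) (u v : V) : Prop :=
  G.underlying.neighborSet u \ {v} = G.underlying.neighborSet v \ {u}

/-- Neighborhood diversity of the underlying undirected graph. -/
noncomputable def ndu (G : MixedGraph V) : ℕ := Nat.card (Quot G.USameType)

/-- A proper coloring: distinct colors across edges, increasing along arcs. -/
def ProperColoring (G : MixedGraph V) (c : V → ℕ) : Prop :=
  (∀ u v, G.Edge u v → c u ≠ c v) ∧ (∀ u v, G.Arc u v → c u < c v)

/-- Chromatic number: least `k` admitting a proper coloring with colors `0,…,k-1`. -/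
noncomputable def chi (G : MixedGraph V) : ℕ :=
  sInf {k | ∃ c : V → ℕ, G.ProperColoring c ∧ ∀ v, c v < k}

/-- Maxrank: the length of a longest directed path. -/
noncomputable def Lambda (G : MixedGraph V) : ℕ :=
  sSup {ℓ | ∃ p : ℕ → V, ∀ i < ℓ, G.Arc (p i) (p (i + 1))}

/-- Inrank of a vertex: the length of a longest directed path ending in it. -/
noncomputable def inrank (G : MixedGraph V) (v : V) : ℕ :=
  sSup {ℓ | ∃ p : ℕ → V, p ℓ = v ∧ ∀ i < ℓ, G.Arc (p i) (p (i + 1))}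

/-- A vertex cover of the underlying undirected graph (covers edges and arcs). -/
def IsVertexCover (G : MixedGraph V) (C : Finset V) : Prop :=
  ∀ u v, G.Edge u v ∨ G.Arc u v → u ∈ C ∨ v ∈ C

/-- Vertex cover number. -/
noncomputable def vc (G : MixedGraph V) : ℕ :=
  sInf {n | ∃ C : Finset V, C.card = n ∧ G.IsVertexCover C}

/-- Transitive closure of a mixed graph without directed cycles: all transitive
arcs are added, and edges parallel to arcs are removed. -/
def tc (G : MixedGraph V) (hG : G.Acyclic) : MixedGraph V where
  Edge u v := G.Edge u v ∧ ¬ Relation.TransGen G.Arc u v ∧ ¬ Relation.TransGen G.Arc v u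
  Arc u v := Relation.TransGen G.Arc u v
  edge_symm := fun u v h => ⟨G.edge_symm u v h.1, h.2.2, h.2.1⟩
  edge_irrefl := fun v h => G.edge_irrefl v h.1
  arc_irrefl := hG
  not_edge_arc := fun u v h hE => hE.2.1 h

/-- Induced mixed subgraph. -/
def induce (G : MixedGraph V) (S : Set V) : MixedGraph S where
  Edge u v := G.Edge u.1 v.1
  Arc u v := G.Arc u.1 v.1
  edge_symm := fun u v h => G.edge_symm u.1 v.1 h
  edge_irrefl := fun v => G.edge_irrefl v.1
  arc_irrefl := fun v => G.arc_irrefl v.1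
  not_edge_arc := fun u v => G.not_edge_arc u.1 v.1

/-- `I` is an independent set of the subgraph induced by `S`. -/
def IndepIn (G : MixedGraph V) (S I : Set V) : Prop :=
  I ⊆ S ∧ ∀ u ∈ I, ∀ v ∈ I, ¬ G.Edge u v ∧ ¬ G.Arc u v

/-- `I` is a maximal independent set of the subgraph induced by `S`. -/
def MaximalIndepIn (G : MixedGraph V) (S I : Set V) : Prop :=
  G.IndepIn S I ∧ ∀ J, G.IndepIn S J → I ⊆ J → J = I

/-- Clique number of the underlying undirected graph. -/
noncomputable def cliqueNum (G : MixedGraph V) : ℕ :=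
  sSup {n | ∃ s : Finset V, G.underlying.IsNClique n s}

end MixedGraph


lemma sameType_equivalence {V : Type} (G : MixedGraph V) : Equivalence G.SameType := by
  constructor
  · intro x; exact ⟨rfl, rfl, rfl⟩
  · intro x y h; exact ⟨h.1.symm, h.2.1.symm, h.2.2.symm⟩
  · intro u v w huv hvw
    by_cases huw : u = w
    · subst huw; exact ⟨rfl, rfl, rfl⟩
    refine ⟨huv.1.trans hvw.1, huv.2.1.trans hvw.2.1, ?_⟩
    -- We prove both inclusions symmetrically
    have main : ∀ (a b c : V), a ≠ c →
        G.SameType a b → G.SameType b c →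
        G.Nu a \ {c} ⊆ G.Nu c \ {a} := by
      intro a b c hac hab hbc x hx
      have hxa : G.Edge x a := hx.1
      have hxc : x ≠ c := hx.2
      by_cases hxb : x = b
      · subst hxb
        -- Edge b a, want Edge b c
        have hab' : G.Edge a x := G.edge_symm _ _ hxa
        have ha : a ∈ G.Nu x \ {c} := ⟨hab', hac⟩
        rw [hbc.2.2] at ha
        have hac' : G.Edge a c := ha.1
        -- so c ∈ Nu a
        have hc : G.Edge c a := G.edge_symm _ _ hac'
        have hcb : c ≠ x := fun h => hxc h.symm
        have hc' : c ∈ G.Nu a \ {x} := ⟨hc, hcb⟩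
        rw [hab.2.2] at hc'
        have : G.Edge c x := hc'.1
        exact ⟨G.edge_symm _ _ this, fun h => G.edge_irrefl a (h ▸ hxa)⟩
      · have h1 : x ∈ G.Nu a \ {b} := ⟨hxa, hxb⟩
        rw [hab.2.2] at h1
        have h2 : x ∈ G.Nu b \ {c} := ⟨h1.1, hxc⟩
        rw [hbc.2.2] at h2
        exact ⟨h2.1, fun h => G.edge_irrefl a (h ▸ hxa)⟩
    apply Set.Subset.antisymm
    · exact main u v w huw huv hvw
    · exact main w v u (fun h => huw h.symm)
        ⟨hvw.1.symm, hvw.2.1.symm, hvw.2.2.symm⟩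
        ⟨huv.1.symm, huv.2.1.symm, huv.2.2.symm⟩

theorem stmt0 {V : Type} [Fintype V] (G : MixedGraph V) (hG : G.Acyclic)
    (ℓ : ℕ) (p : ℕ → V) (hp : ∀ i < ℓ, G.Arc (p i) (p (i + 1))) :
    (∀ i ≤ ℓ, ∀ j ≤ ℓ, i ≠ j → ¬ G.SameType (p i) (p j)) ∧ ℓ + 1 ≤ G.ndm := by
  have hchain : ∀ j i, i < j → j ≤ ℓ → Relation.TransGen G.Arc (p i) (p j) := by
    intro j
    induction j with
    | zero => omega
    | succ n ih =>
      intro i hi hj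
      rcases Nat.lt_succ_iff_lt_or_eq.mp hi with h | h
      · exact (ih i h (by omega)).tail (hp n (by omega))
      · subst h; exact Relation.TransGen.single (hp i (by omega))
  have key : ∀ i j, i < j → j ≤ ℓ → ¬ G.SameType (p i) (p j) := by
    intro i j hij hj hst
    have h1 : p (i + 1) ∈ G.Nplus (p i) := hp i (by omega)
    rw [hst.2.1] at h1
    have h2 : G.Arc (p j) (p (i + 1)) := h1
    rcases eq_or_lt_of_le (show i + 1 ≤ j by omega) with h | h
    · exact G.arc_irrefl (p j) (h ▸ h2)
    · exact hG (p (i + 1)) ((hchain j (i + 1) h hj).tail h2)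
  have hdist : ∀ i ≤ ℓ, ∀ j ≤ ℓ, i ≠ j → ¬ G.SameType (p i) (p j) := by
    intro i hi j hj hne hst
    rcases lt_or_gt_of_ne hne with h | h
    · exact key i j h hj hst
    · exact key j i h hi ⟨hst.1.symm, hst.2.1.symm, hst.2.2.symm⟩
  refine ⟨hdist, ?_⟩
  have hfin : Finite (Quot G.SameType) :=
    Finite.of_surjective (Quot.mk _) Quot.mk_surjective
  have hinj : Function.Injective (fun i : Fin (ℓ + 1) => Quot.mk G.SameType (p i.1)) := by
    intro i j h
    have := ((sameType_equivalence G).eqvGen_iff).mp ((Quot.eq).mp h)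
    by_contra hne
    exact hdist i.1 (by omega) j.1 (by omega) (fun hh => hne (Fin.ext hh)) this
  have := Nat.card_le_card_of_injective _ hinj
  simpa [MixedGraph.ndm] using this
end

section
/- For any mixed graph G without directed cycles with a vertex cover of size k (in the underlying undirected graph, where arcs are also counted as covered pairs), the mixed neighborhood diversity of G is at most k + 4^k. -/
theorem stmt2 {V : Type} [Fintype V] (G : MixedGraph V) (hG : G.Acyclic)
    (C : Finset V) (hC : G.IsVertexCover C) :
    G.ndm ≤ C.card + 4 ^ C.card := by
  classical
  -- no 2-cycles
  have no2 : ∀ a b, G.Arc a b → G.Arc b a → False := fun a b h1 h2 =>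
    hG a ((Relation.TransGen.single h1).tail h2)
  have edgeNoArc : ∀ a b, G.Edge a b → ¬ G.Arc a b ∧ ¬ G.Arc b a := by
    intro a b he
    constructor
    · intro ha; exact G.not_edge_arc a b ha he
    · intro ha; exact G.not_edge_arc b a ha (G.edge_symm a b he)
  -- encoding of the relation between a cover vertex x and any vertex w
  set code : V → V → Fin 4 := fun x w =>
    if G.Arc x w then 1 else if G.Arc w x then 2 else if G.Edge x w then 3 else 0
    with hcode
  have code1 : ∀ x w, code x w = 1 ↔ G.Arc x w := by
    intro x w
    simp only [hcode]
    split_ifs with h1 h2 h3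
    · exact iff_of_true rfl h1
    · exact iff_of_false (by decide) h1
    · exact iff_of_false (by decide) h1
    · exact iff_of_false (by decide) h1
  have code2 : ∀ x w, code x w = 2 ↔ G.Arc w x := by
    intro x w
    simp only [hcode]
    split_ifs with h1 h2 h3
    · exact iff_of_false (by decide) (fun h => no2 x w h1 h)
    · exact iff_of_true rfl h2
    · exact iff_of_false (by decide) h2
    · exact iff_of_false (by decide) h2
  have code3 : ∀ x w, code x w = 3 ↔ G.Edge x w := by
    intro x w
    simp only [hcode]
    split_ifs with h1 h2 h3
    · exact iff_of_false (by decide) (fun h => (edgeNoArc x w h).1 h1)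
    · exact iff_of_false (by decide) (fun h => (edgeNoArc x w h).2 h2)
    · exact iff_of_true rfl h3
    · exact iff_of_false (by decide) h3
  set f : V → (↥C ⊕ (↥C → Fin 4)) := fun v =>
    if h : v ∈ C then Sum.inl ⟨v, h⟩ else Sum.inr (fun c => code c.1 v)
    with hf
  have key : ∀ u v, f u = f v → G.SameType u v := by
    intro u v huv
    simp only [hf] at huv
    split_ifs at huv with hu hv hv
    · -- both in C
      have : u = v := by simpa using huv
      subst this
      exact ⟨rfl, rfl, rfl⟩
    · -- neither in C
      have hcongr : ∀ x (hx : x ∈ C), code x u = code x v := by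
        intro x hx
        have := congrFun (Sum.inr.inj huv) ⟨x, hx⟩
        simpa using this
      have hne1 : ¬ G.Edge u v := by
        intro h
        rcases hC u v (Or.inl h) with h' | h' <;> [exact hu h'; exact hv h']
      constructor
      · ext x
        simp only [MixedGraph.Nminus, Set.mem_setOf_eq]
        constructor
        · intro h
          have hx : x ∈ C := by
            rcases hC x u (Or.inr h) with h' | h'; exact h'; exact absurd h' hu
          exact (code1 x v).mp (by rw [← hcongr x hx]; exact (code1 x u).mpr h)
        · intro h
          have hx : x ∈ C := by
            rcases hC x v (Or.inr h) with h' | h'; exact h'; exact absurd h' hv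
          exact (code1 x u).mp (by rw [hcongr x hx]; exact (code1 x v).mpr h)
      constructor
      · ext x
        simp only [MixedGraph.Nplus, Set.mem_setOf_eq]
        constructor
        · intro h
          have hx : x ∈ C := by
            rcases hC u x (Or.inr h) with h' | h'; exact absurd h' hu; exact h'
          exact (code2 x v).mp (by rw [← hcongr x hx]; exact (code2 x u).mpr h)
        · intro h
          have hx : x ∈ C := by
            rcases hC v x (Or.inr h) with h' | h'; exact absurd h' hv; exact h'
          exact (code2 x u).mp (by rw [hcongr x hx]; exact (code2 x v).mpr h)
      · ext x
        simp only [MixedGraph.Nu, Set.mem_diff, Set.mem_setOf_eq, Set.mem_singleton_iff]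
        constructor
        · rintro ⟨h, hxv⟩
          have hx : x ∈ C := by
            rcases hC x u (Or.inl h) with h' | h'; exact h'; exact absurd h' hu
          refine ⟨(code3 x v).mp (by rw [← hcongr x hx]; exact (code3 x u).mpr h), ?_⟩
          intro h'; exact G.edge_irrefl u (h' ▸ h)
        · rintro ⟨h, hxu⟩
          have hx : x ∈ C := by
            rcases hC x v (Or.inl h) with h' | h'; exact h'; exact absurd h' hv
          refine ⟨(code3 x u).mp (by rw [hcongr x hx]; exact (code3 x v).mpr h), ?_⟩
          intro h'; exact G.edge_irrefl v (h' ▸ h)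
  -- inject the quotient into the finite type
  have hinj : Function.Injective (fun q : Quot G.SameType => f q.out) := by
    intro q q' h
    have := key _ _ h
    calc q = Quot.mk _ q.out := (Quot.out_eq q).symm
      _ = Quot.mk _ q'.out := Quot.sound this
      _ = q' := Quot.out_eq q'
  have hle : G.ndm ≤ Nat.card (↥C ⊕ (↥C → Fin 4)) :=
    Nat.card_le_card_of_injective _ hinj
  calc G.ndm ≤ Nat.card (↥C ⊕ (↥C → Fin 4)) := hle
    _ = C.card + 4 ^ C.card := by
        simp [Nat.card_eq_fintype_card, Fintype.card_fun]
end

section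
/- For any mixed graph G without directed cycles, if two vertices u and v have the same mixed type in G, then they have the same mixed type in the transitive closure G⁺ of G. Consequently, the mixed neighborhood diversity of G⁺ is at most the mixed neighborhood diversity of G. -/
theorem stmt3 {V : Type} [Fintype V] (G : MixedGraph V) (hG : G.Acyclic) :
    (∀ u v, G.SameType u v → (G.tc hG).SameType u v) ∧ (G.tc hG).ndm ≤ G.ndm := by
  have key : ∀ u v, G.SameType u v → (G.tc hG).SameType u v := by
    intro u v ⟨hm, hp, he⟩
    have hmm : ∀ b, G.Arc b u ↔ G.Arc b v := fun b => Set.ext_iff.mp hm b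
    have hpp : ∀ b, G.Arc u b ↔ G.Arc v b := fun b => Set.ext_iff.mp hp b
    have hee : ∀ w, (G.Edge w u ∧ w ≠ v) ↔ (G.Edge w v ∧ w ≠ u) := by
      intro w
      have := Set.ext_iff.mp he w
      simpa [MixedGraph.Nu, Set.mem_diff] using this
    have tgu : ∀ w, Relation.TransGen G.Arc w u ↔ Relation.TransGen G.Arc w v := by
      intro w
      rw [Relation.TransGen.tail'_iff, Relation.TransGen.tail'_iff]
      exact exists_congr fun b => and_congr_right fun _ => hmm b
    have tgp : ∀ w, Relation.TransGen G.Arc u w ↔ Relation.TransGen G.Arc v w := by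
      intro w
      rw [Relation.TransGen.head'_iff, Relation.TransGen.head'_iff]
      exact exists_congr fun b => and_congr_left fun _ => hpp b
    refine ⟨Set.ext fun w => tgu w, Set.ext fun w => tgp w, ?_⟩
    ext w
    simp only [Set.mem_diff, Set.mem_singleton_iff, MixedGraph.Nu, Set.mem_setOf_eq, MixedGraph.tc]
    constructor
    · rintro ⟨⟨hE, h1, h2⟩, hwv⟩
      obtain ⟨hE', hwu⟩ := (hee w).mp ⟨hE, hwv⟩
      exact ⟨⟨hE', fun h => h1 ((tgu w).mpr h), fun h => h2 ((tgp w).mpr h)⟩, hwu⟩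
    · rintro ⟨⟨hE, h1, h2⟩, hwu⟩
      obtain ⟨hE', hwv⟩ := (hee w).mpr ⟨hE, hwu⟩
      exact ⟨⟨hE', fun h => h1 ((tgu w).mp h), fun h => h2 ((tgp w).mp h)⟩, hwv⟩
  refine ⟨key, ?_⟩
  have hs : Function.Surjective (Quot.lift (Quot.mk (G.tc hG).SameType)
      (fun a b h => Quot.sound (key a b h)) : Quot G.SameType → Quot (G.tc hG).SameType) := by
    intro q
    obtain ⟨v, rfl⟩ := Quot.exists_rep q
    exact ⟨Quot.mk _ v, rfl⟩
  exact Nat.card_le_card_of_surjective _ hs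
end

section
/- For every ℓ ≥ 1 there exists a mixed graph G_ℓ without directed cycles whose underlying undirected graph is the complete graph on ℓ vertices (hence undirected neighborhood diversity 1), but whose mixed neighborhood diversity is at least ℓ. -/
theorem stmt5 (ℓ : ℕ) (hℓ : 1 ≤ ℓ) :
    ∃ G : MixedGraph (Fin ℓ), G.Acyclic ∧ G.underlying = ⊤ ∧ G.ndu = 1 ∧ ℓ ≤ G.ndm := by
  classical
  set G : MixedGraph (Fin ℓ) :=
    { Edge := fun u v => u ≠ v ∧ (u : ℕ) + 1 ≠ (v : ℕ) ∧ (v : ℕ) + 1 ≠ (u : ℕ)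
      Arc := fun u v => (u : ℕ) + 1 = (v : ℕ)
      edge_symm := fun u v h => ⟨h.1.symm, h.2.2, h.2.1⟩
      edge_irrefl := fun v h => h.1 rfl
      arc_irrefl := fun v h => by omega
      not_edge_arc := fun u v h hE => hE.2.1 h } with hGdef
  have harc : ∀ u v : Fin ℓ, G.Arc u v ↔ (u : ℕ) + 1 = (v : ℕ) := fun u v => Iff.rfl
  have hlt : ∀ u v : Fin ℓ, Relation.TransGen G.Arc u v → (u : ℕ) < (v : ℕ) := by
    intro u v h
    induction h with
    | single h => omega
    | tail _ h ih => omega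
  have hacyc : G.Acyclic := fun v h => lt_irrefl _ (hlt v v h)
  have hund : G.underlying = ⊤ := by
    ext u v
    simp only [MixedGraph.underlying, SimpleGraph.top_adj]
    constructor
    · rintro (h | h | h)
      · exact h.1
      · intro he; subst he; omega
      · intro he; subst he; omega
    · intro hne
      by_cases h1 : (u : ℕ) + 1 = (v : ℕ)
      · exact Or.inr (Or.inl h1)
      by_cases h2 : (v : ℕ) + 1 = (u : ℕ)
      · exact Or.inr (Or.inr h2)
      · exact Or.inl ⟨hne, h1, h2⟩
  refine ⟨G, hacyc, hund, ?_, ?_⟩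
  · -- ndu = 1
    have hall : ∀ u v : Fin ℓ, G.USameType u v := by
      intro u v
      unfold MixedGraph.USameType
      rw [hund]
      ext x
      simp only [SimpleGraph.neighborSet, SimpleGraph.top_adj, Set.mem_diff,
        Set.mem_setOf_eq, Set.mem_singleton_iff]
      tauto
    have : Nonempty (Fin ℓ) := ⟨⟨0, hℓ⟩⟩
    have hne : Nonempty (Quot G.USameType) := ⟨Quot.mk _ this.some⟩
    have hsub : Subsingleton (Quot G.USameType) := by
      constructor
      intro a b
      induction a using Quot.ind with | _ a =>
      induction b using Quot.ind with | _ b =>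
      exact Quot.sound (hall a b)
    unfold MixedGraph.ndu
    haveI := hsub
    haveI := hne
    exact Nat.card_eq_one_iff_unique.mpr ⟨hsub, hne⟩
  · -- ℓ ≤ ndm
    have hdist : ∀ u v : Fin ℓ, G.SameType u v → u = v := by
      intro u v h
      obtain ⟨hm, hp, _⟩ := h
      by_contra hne
      by_cases hu : (u : ℕ) + 1 < ℓ
      · -- u has an out-neighbor u+1
        have hx : (⟨(u : ℕ) + 1, hu⟩ : Fin ℓ) ∈ G.Nplus u := by
          show (u : ℕ) + 1 = _; rfl
        rw [hp] at hx
        have : (v : ℕ) + 1 = (u : ℕ) + 1 := hx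
        exact hne (Fin.ext (by omega))
      · -- u is the last vertex; then v has an out-neighbor v+1 unless v is last too
        have hv : (v : ℕ) + 1 < ℓ := by
          have hv' := v.isLt
          have hu' := u.isLt
          by_contra h
          exact hne (Fin.ext (by omega))
        have hx : (⟨(v : ℕ) + 1, hv⟩ : Fin ℓ) ∈ G.Nplus v := by
          show (v : ℕ) + 1 = _; rfl
        rw [← hp] at hx
        have : (u : ℕ) + 1 = (v : ℕ) + 1 := hx
        exact absurd hv (by omega)
    have hlift : Function.Injective (Quot.mk G.SameType) := by
      intro a b h
      have : Quot.lift id hdist (Quot.mk G.SameType a) = Quot.lift id hdist (Quot.mk G.SameType b) := by rw [h]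
      simpa using this
    haveI : Finite (Quot G.SameType) := Finite.of_surjective _ (Quot.exists_rep)
    have h2 := Nat.card_le_card_of_injective _ hlift
    unfold MixedGraph.ndm
    simpa using h2
end

section
/- For every non-empty mixed graph G without directed cycles, the number of maximal independent sets in the subgraph induced by the vertices of inrank 0 is at most (ω(G)+1)^{nd_u(G)}, where ω(G) is the clique number and nd_u(G) the neighborhood diversity of the underlying undirected graph. -/
section Aux

open Classical

variable {V : Type}

/-- adjacency transfer along a neighborhood equation -/
lemma adjT (G : MixedGraph V) {p q x : V}
    (h : G.underlying.neighborSet p \ {q} = G.underlying.neighborSet q \ {p})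
    (hx : G.underlying.Adj p x) (hxq : x ≠ q) : G.underlying.Adj q x := by
  have h1 : x ∈ G.underlying.neighborSet p \ {q} := by
    rw [Set.mem_diff, SimpleGraph.mem_neighborSet, Set.mem_singleton_iff]
    exact ⟨hx, hxq⟩
  rw [h, Set.mem_diff, SimpleGraph.mem_neighborSet] at h1
  exact h1.1

lemma usame_equiv (G : MixedGraph V) : Equivalence G.USameType := by
  have key : ∀ (a b c : V),
      (G.underlying.neighborSet a \ {b} = G.underlying.neighborSet b \ {a}) →
      (G.underlying.neighborSet b \ {c} = G.underlying.neighborSet c \ {b}) →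
      ∀ y, G.underlying.Adj a y → y ≠ c → G.underlying.Adj c y := by
    intro a b c hab hbc y hay hyc
    by_cases hyb : y = b
    · subst hyb
      by_cases hac : a = c
      · exact (hac ▸ hay)
      · have hca : G.underlying.Adj c a := adjT G hbc hay.symm hac
        have := adjT G hab hca.symm (fun h => hyc h.symm)
        exact this.symm
    · exact adjT G hbc (adjT G hab hay hyb) hyc
  constructor
  · intro x; rfl
  · intro x y h; exact h.symm
  · intro u v w huv hvw
    unfold MixedGraph.USameType at *
    ext x
    rw [Set.mem_diff, Set.mem_diff, SimpleGraph.mem_neighborSet,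
      SimpleGraph.mem_neighborSet, Set.mem_singleton_iff, Set.mem_singleton_iff]
    constructor
    · rintro ⟨hxu, hxw⟩
      exact ⟨key u v w huv hvw x hxu hxw, fun h => G.underlying.loopless.irrefl u (h ▸ hxu)⟩
    · rintro ⟨hxw, hxu⟩
      exact ⟨key w v u (by rw [hvw]) (by rw [huv]) x hxw hxu,
        fun h => G.underlying.loopless.irrefl w (h ▸ hxw)⟩

lemma usame_of_mk_eq (G : MixedGraph V) {u v : V}
    (h : Quot.mk G.USameType u = Quot.mk G.USameType v) : G.USameType u v :=
  ((usame_equiv G).eqvGen_iff).mp (Quot.eq.mp h)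

/-- transfer adjacency along same type -/
lemma usame_adj (G : MixedGraph V) {u v x : V} (h : G.USameType u v)
    (hx : G.underlying.Adj x u) (hxv : x ≠ v) : G.underlying.Adj v x :=
  adjT G h hx.symm hxv

/-- step lemma -/
lemma usame_step (G : MixedGraph V) {a b c : V} (hbc : G.USameType b c)
    (hab : G.underlying.Adj a b) (hac : a ≠ c) : b = c ∨ G.underlying.Adj a c := by
  by_cases h : b = c
  · exact Or.inl h
  · exact Or.inr (usame_adj G hbc hab hac).symm

/-- homogeneity: if some distinct pair in a class is adjacent, all distinct pairs are -/
lemma usame_homog (G : MixedGraph V) {u v w x : V}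
    (huv : G.USameType u v) (huw : G.USameType u w) (hux : G.USameType u x)
    (hadj : G.underlying.Adj u v) (hwx : w ≠ x) : G.underlying.Adj w x := by
  have e := usame_equiv G
  have hvx : G.USameType v x := e.trans (e.symm huv) hux
  have hvw : G.USameType v w := e.trans (e.symm huv) huw
  have step1 : G.underlying.Adj u x ∨ u = x ∨ v = x := by
    by_cases hux' : u = x
    · exact Or.inr (Or.inl hux')
    · rcases usame_step G hvx hadj hux' with h | h
      · exact Or.inr (Or.inr h)
      · exact Or.inl h
  rcases step1 with h | h | h
  · by_cases hwu : w = u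
    · exact hwu ▸ h
    · rcases usame_step G huw h.symm (fun hh => hwx hh.symm) with h2 | h2
      · exact absurd h2 (Ne.symm hwu)
      · exact h2.symm
  · subst h
    by_cases hwv : w = v
    · exact (hwv ▸ hadj).symm
    · rcases usame_step G hvw hadj (fun hh => hwx hh.symm) with h2 | h2
      · exact absurd h2.symm hwv
      · exact h2.symm
  · subst h
    by_cases hwu : w = u
    · exact hwu ▸ hadj
    · rcases usame_step G huw hadj.symm (fun hh => hwx hh.symm) with h2 | h2
      · exact absurd h2 (Ne.symm hwu)
      · exact h2.symm

/-- all-or-none lemma for non-adjacent pairs of the same type -/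
lemma all_or_none (G : MixedGraph V) {S I : Set V} (hI : G.MaximalIndepIn S I)
    {u v : V} (hu : u ∈ I) (hv : v ∈ S) (huv : G.USameType u v)
    (hnadj : ¬ G.underlying.Adj u v) : v ∈ I := by
  by_cases hvI : v ∈ I
  · exact hvI
  have key : ∀ b ∈ I, ¬ G.underlying.Adj v b := by
    intro b hb hadj
    by_cases hbu : b = u
    · exact hnadj (hbu ▸ hadj).symm
    · have habj : G.underlying.Adj u b :=
        usame_adj G ((usame_equiv G).symm huv) hadj.symm hbu
      rcases habj with h | h | h
      · exact (hI.1.2 u hu b hb).1 h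
      · exact (hI.1.2 u hu b hb).2 h
      · exact (hI.1.2 b hb u hu).2 h
  have hJ : G.IndepIn S (I ∪ {v}) := by
    constructor
    · intro x hx
      rcases hx with hx | hx
      · exact hI.1.1 hx
      · rw [Set.mem_singleton_iff] at hx; exact hx ▸ hv
    · intro a ha b hb
      rcases ha with ha | ha <;> rcases hb with hb | hb
      · exact hI.1.2 a ha b hb
      · rw [Set.mem_singleton_iff] at hb; subst hb
        constructor
        · intro h; exact key a ha (Or.inl (G.edge_symm _ _ h))
        · intro h; exact key a ha (Or.inr (Or.inr h))
      · rw [Set.mem_singleton_iff] at ha; subst ha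
        constructor
        · intro h; exact key b hb (Or.inl h)
        · intro h; exact key b hb (Or.inr (Or.inl h))
      · rw [Set.mem_singleton_iff] at ha hb; subst ha; subst hb
        exact ⟨G.edge_irrefl _, G.arc_irrefl _⟩
  have := hI.2 _ hJ Set.subset_union_left
  rw [← this]
  exact Or.inr rfl

end Aux
section Aux2

attribute [local instance] Classical.propDecidable

variable {V : Type}

/-- code of an independent set on a class -/
noncomputable def rawCode [Fintype V] (G : MixedGraph V) (ι : V → ℕ) (I : Set V)
    (q : Quot G.USameType) : ℕ :=
  if h : ∃ v, v ∈ I ∧ Quot.mk G.USameType v = q then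
    if (∀ u w : V, Quot.mk G.USameType u = q → Quot.mk G.USameType w = q → u ≠ w →
        G.underlying.Adj u w) then
      (Finset.univ.filter
        (fun u : V => Quot.mk G.USameType u = q ∧ ι u < ι h.choose)).card + 1
    else 1
  else 0

end Aux2

theorem stmt13 {V : Type} [Fintype V] [Nonempty V] (G : MixedGraph V) (hG : G.Acyclic) :
    Nat.card {I : Set V // G.MaximalIndepIn {v | G.inrank v = 0} I} ≤
      (G.cliqueNum + 1) ^ G.ndu := by
  classical
  set S : Set V := {v | G.inrank v = 0} with hS
  let ι : V → ℕ := fun v => ((Fintype.equivFin V) v : ℕ)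
  have hι : Function.Injective ι := by
    intro a b h
    exact (Fintype.equivFin V).injective (Fin.val_injective h)
  -- clique number facts
  have hBdd : BddAbove {n | ∃ s : Finset V, G.underlying.IsNClique n s} := by
    refine ⟨Fintype.card V, ?_⟩
    rintro n ⟨s, hs⟩
    rw [← hs.2]
    exact Finset.card_le_univ s
  have hclique_ge : ∀ (s : Finset V), G.underlying.IsClique ↑s → s.card ≤ G.cliqueNum := by
    intro s hs
    exact le_csSup hBdd ⟨s, hs, rfl⟩
  have hone : 1 ≤ G.cliqueNum := by
    have := hclique_ge {Classical.arbitrary V} (by simp [SimpleGraph.IsClique])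
    simpa using this
  -- rank injectivity
  have rank_inj : ∀ (q : Quot G.USameType) (v w : V), Quot.mk G.USameType v = q →
      Quot.mk G.USameType w = q →
      (Finset.univ.filter (fun u : V => Quot.mk G.USameType u = q ∧ ι u < ι v)).card =
      (Finset.univ.filter (fun u : V => Quot.mk G.USameType u = q ∧ ι u < ι w)).card →
      v = w := by
    intro q v w hv hw hc
    have hlt : ∀ (a b : V), Quot.mk G.USameType a = q → ι a < ι b →
        (Finset.univ.filter (fun u : V => Quot.mk G.USameType u = q ∧ ι u < ι a)).card <
        (Finset.univ.filter (fun u : V => Quot.mk G.USameType u = q ∧ ι u < ι b)).card := by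
      intro a b ha hab
      apply Finset.card_lt_card
      constructor
      · intro x hx
        simp only [Finset.mem_filter, Finset.mem_univ, true_and] at hx ⊢
        exact ⟨hx.1, hx.2.trans hab⟩
      · intro hsub
        have h1 : a ∈ Finset.univ.filter
            (fun u : V => Quot.mk G.USameType u = q ∧ ι u < ι b) := by
          simp only [Finset.mem_filter, Finset.mem_univ, true_and]
          exact ⟨ha, hab⟩
        have h2 := hsub h1
        simp only [Finset.mem_filter, Finset.mem_univ, true_and] at h2
        exact lt_irrefl _ h2.2
    rcases lt_trichotomy (ι v) (ι w) with h | h | h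
    · exact absurd hc (Nat.ne_of_lt (hlt v w hv h))
    · exact hι h
    · exact absurd hc.symm (Nat.ne_of_lt (hlt w v hw h))
  -- the raw code is bounded
  have hraw_le : ∀ (I : Set V), ∀ q, rawCode G ι I q ≤ G.cliqueNum := by
    intro I q
    unfold rawCode
    split_ifs with h1 h2
    · set c := h1.choose with hc
      have hspec := h1.choose_spec
      have hsub : (Finset.univ.filter
          (fun u : V => Quot.mk G.USameType u = q ∧ ι u < ι c)) ⊂
          (Finset.univ.filter (fun u : V => Quot.mk G.USameType u = q)) := by
        constructor
        · intro x hx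
          simp only [Finset.mem_filter, Finset.mem_univ, true_and] at hx ⊢
          exact hx.1
        · intro hsub
          have h1' : c ∈ Finset.univ.filter (fun u : V => Quot.mk G.USameType u = q) := by
            simp only [Finset.mem_filter, Finset.mem_univ, true_and]
            exact hspec.2
          have h2' := hsub h1'
          simp only [Finset.mem_filter, Finset.mem_univ, true_and] at h2'
          exact lt_irrefl _ h2'.2
      have hcl : G.underlying.IsClique
          ↑(Finset.univ.filter (fun u : V => Quot.mk G.USameType u = q)) := by
        intro a ha b hb hab
        simp only [Finset.coe_filter, Set.mem_setOf_eq, Finset.mem_univ, true_and] at ha hb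
        exact h2 a b ha hb hab
      have := hclique_ge _ hcl
      have hlt := Finset.card_lt_card hsub
      omega
    · exact hone
    · exact Nat.zero_le _
  -- injectivity of the raw code on maximal independent sets
  have subs : ∀ (A B : Set V), G.MaximalIndepIn S A → G.MaximalIndepIn S B →
      (∀ q, rawCode G ι A q = rawCode G ι B q) → A ⊆ B := by
    intro A B hA hB heq v hv
    set q := Quot.mk G.USameType v with hq
    have hAq : ∃ u, u ∈ A ∧ Quot.mk G.USameType u = q := ⟨v, hv, rfl⟩
    have h0 : rawCode G ι A q ≠ 0 := by
      unfold rawCode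
      rw [dif_pos hAq]
      split_ifs <;> simp
    have hBq : ∃ u, u ∈ B ∧ Quot.mk G.USameType u = q := by
      by_contra h
      rw [heq q] at h0
      unfold rawCode at h0
      rw [dif_neg h] at h0
      exact h0 rfl
    by_cases hcl : ∀ u w : V, Quot.mk G.USameType u = q → Quot.mk G.USameType w = q →
        u ≠ w → G.underlying.Adj u w
    · -- clique class
      have hEA := hAq.choose_spec
      have hEB := hBq.choose_spec
      have hcards : (Finset.univ.filter
          (fun u : V => Quot.mk G.USameType u = q ∧ ι u < ι hAq.choose)).card =
          (Finset.univ.filter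
          (fun u : V => Quot.mk G.USameType u = q ∧ ι u < ι hBq.choose)).card := by
        have h' := heq q
        unfold rawCode at h'
        rw [dif_pos hAq, dif_pos hBq, if_pos hcl, if_pos hcl] at h'
        omega
      have hchoose_eq : hAq.choose = hBq.choose :=
        rank_inj q _ _ hEA.2 hEB.2 hcards
      have hvA : v = hAq.choose := by
        by_contra hne
        have hadj := hcl v hAq.choose rfl hEA.2 hne
        rcases hadj with h | h | h
        · exact (hA.1.2 v hv _ hEA.1).1 h
        · exact (hA.1.2 v hv _ hEA.1).2 h
        · exact (hA.1.2 _ hEA.1 v hv).2 h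
      rw [hvA, hchoose_eq]
      exact hEB.1
    · -- independent class
      push_neg at hcl
      obtain ⟨a, b, ha, hb, hab, hnadjab⟩ := hcl
      have hu := hBq.choose_spec
      set u := hBq.choose with hudef
      have huv : G.USameType u v := usame_of_mk_eq G hu.2
      have hnadj_uv : ¬ G.underlying.Adj u v := by
        intro hadj
        by_cases h : u = v
        · exact G.underlying.loopless.irrefl _ (h ▸ hadj)
        · exact hnadjab (usame_homog G huv
            (usame_of_mk_eq G (hu.2.trans ha.symm))
            (usame_of_mk_eq G (hu.2.trans hb.symm)) hadj hab)
      exact all_or_none G hB hu.1 (hA.1.1 hv) huv hnadj_uv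
  -- the encoding map
  haveI : Finite (Quot G.USameType) := Quot.finite _
  let F : {I : Set V // G.MaximalIndepIn S I} →
      (Quot G.USameType → Fin (G.cliqueNum + 1)) :=
    fun I q => ⟨min (rawCode G ι I.1 q) G.cliqueNum, Nat.lt_succ_of_le (min_le_right _ _)⟩
  have hF_inj : Function.Injective F := by
    intro I I' h
    have hraw : ∀ q, rawCode G ι I.1 q = rawCode G ι I'.1 q := by
      intro q
      have h1 := congrArg Fin.val (congrFun h q)
      simp only [F] at h1
      rw [Nat.min_eq_left (hraw_le I.1 q), Nat.min_eq_left (hraw_le I'.1 q)] at h1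
      exact h1
    apply Subtype.ext
    apply Set.Subset.antisymm
    · exact subs I.1 I'.1 I.2 I'.2 hraw
    · exact subs I'.1 I.1 I'.2 I.2 (fun q => (hraw q).symm)
  calc Nat.card {I : Set V // G.MaximalIndepIn S I}
      ≤ Nat.card (Quot G.USameType → Fin (G.cliqueNum + 1)) :=
        Nat.card_le_card_of_injective F hF_inj
    _ = (G.cliqueNum + 1) ^ G.ndu := by
        rw [Nat.card_fun]
        simp [MixedGraph.ndu, Nat.card_eq_fintype_card]
end

section
/- There exists a mixed graph G̃ without directed cycles (namely the star K_{1,2} with the center joined to one leaf by an undirected edge and to the other leaf by an outgoing arc) with mixed cliquewidth exactly 3, whose corresponding directed graph D(G̃) (obtained by replacing each edge by a pair of opposite arcs) has directed cliquewidth 2. -/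
/-- A labeled mixed graph: the intermediate object of a clique-width expression. -/
structure LGraph (V L : Type) where
  verts : Set V
  lab : V → L
  Edge : V → V → Prop
  Arc : V → V → Prop

/-- Mixed clique-width expressions over label set `L` and vertex names `V`. -/
inductive MCExpr (L V : Type) where
  | vertex (v : V) (l : L)
  | union (a b : MCExpr L V)
  | eta (i j : L) (a : MCExpr L V)
  | alpha (i j : L) (a : MCExpr L V)
  | relabel (i j : L) (a : MCExpr L V)

open Classical in
/-- Evaluation of a mixed clique-width expression. -/
noncomputable def MCExpr.eval {L V : Type} : MCExpr L V → LGraph V L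
  | .vertex v l => ⟨{v}, fun _ => l, fun _ _ => False, fun _ _ => False⟩
  | .union a b =>
      ⟨a.eval.verts ∪ b.eval.verts,
        fun x => if x ∈ a.eval.verts then a.eval.lab x else b.eval.lab x,
        fun u v => a.eval.Edge u v ∨ b.eval.Edge u v,
        fun u v => a.eval.Arc u v ∨ b.eval.Arc u v⟩
  | .eta i j a =>
      ⟨a.eval.verts, a.eval.lab,
        fun u v => a.eval.Edge u v ∨ (u ∈ a.eval.verts ∧ v ∈ a.eval.verts ∧
          ((a.eval.lab u = i ∧ a.eval.lab v = j) ∨ (a.eval.lab u = j ∧ a.eval.lab v = i))),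
        a.eval.Arc⟩
  | .alpha i j a =>
      ⟨a.eval.verts, a.eval.lab, a.eval.Edge,
        fun u v => a.eval.Arc u v ∨ (u ∈ a.eval.verts ∧ v ∈ a.eval.verts ∧
          a.eval.lab u = i ∧ a.eval.lab v = j)⟩
  | .relabel i j a =>
      ⟨a.eval.verts, fun x => if a.eval.lab x = i then j else a.eval.lab x,
        a.eval.Edge, a.eval.Arc⟩

/-- Well-formedness: unions are disjoint, edge/arc operations use distinct labels. -/
def MCExpr.WF {L V : Type} : MCExpr L V → Prop
  | .vertex _ _ => True
  | .union a b => a.WF ∧ b.WF ∧ a.eval.verts ∩ b.eval.verts = ∅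
  | .eta i j a => a.WF ∧ i ≠ j
  | .alpha i j a => a.WF ∧ i ≠ j
  | .relabel _ _ a => a.WF

/-- An expression using no arc operations (an undirected clique-width expression). -/
def MCExpr.ArcFree {L V : Type} : MCExpr L V → Prop
  | .vertex _ _ => True
  | .union a b => a.ArcFree ∧ b.ArcFree
  | .eta _ _ a => a.ArcFree
  | .alpha _ _ _ => False
  | .relabel _ _ a => a.ArcFree

/-- An expression using no edge operations (a directed clique-width expression). -/
def MCExpr.EtaFree {L V : Type} : MCExpr L V → Prop
  | .vertex _ _ => True
  | .union a b => a.EtaFree ∧ b.EtaFree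
  | .eta _ _ _ => False
  | .alpha _ _ a => a.EtaFree
  | .relabel _ _ a => a.EtaFree

/-- `e` is a well-formed expression constructing the mixed graph with edge
relation `E` and arc relation `A` on all of `V`. -/
def MCExpr.Builds {L V : Type} (e : MCExpr L V) (E A : V → V → Prop) : Prop :=
  e.WF ∧ e.eval.verts = Set.univ ∧
    (∀ u v, e.eval.Edge u v ↔ E u v) ∧ (∀ u v, e.eval.Arc u v ↔ A u v)

/-- Edges and arcs of an evaluated expression lie within its vertex set. -/
lemma MCExpr.mem_of_rel {L V : Type} (e : MCExpr L V) :
    ∀ u v, (e.eval.Edge u v → u ∈ e.eval.verts ∧ v ∈ e.eval.verts) ∧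
           (e.eval.Arc u v → u ∈ e.eval.verts ∧ v ∈ e.eval.verts) := by
  induction e with
  | vertex w l => intro u v; simp [MCExpr.eval]
  | union a b iha ihb =>
      intro u v
      constructor
      · rintro (h | h)
        · exact ⟨Or.inl ((iha u v).1 h).1, Or.inl ((iha u v).1 h).2⟩
        · exact ⟨Or.inr ((ihb u v).1 h).1, Or.inr ((ihb u v).1 h).2⟩
      · rintro (h | h)
        · exact ⟨Or.inl ((iha u v).2 h).1, Or.inl ((iha u v).2 h).2⟩
        · exact ⟨Or.inr ((ihb u v).2 h).1, Or.inr ((ihb u v).2 h).2⟩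
  | eta i j a ih =>
      intro u v
      constructor
      · rintro (h | ⟨hu, hv, _⟩)
        · exact (ih u v).1 h
        · exact ⟨hu, hv⟩
      · exact (ih u v).2
  | alpha i j a ih =>
      intro u v
      constructor
      · exact (ih u v).1
      · rintro (h | ⟨hu, hv, _⟩)
        · exact (ih u v).2 h
        · exact ⟨hu, hv⟩
  | relabel i j a ih => exact ih

/-- With only two labels, no well-formed expression whose edges are contained in
the edge `{0,1}` and arcs contained in the arc `(0,2)` can contain both. -/
lemma nogo (e : MCExpr (Fin 2) (Fin 3)) (hWF : e.WF)
    (hE : ∀ u v, e.eval.Edge u v → (u = 0 ∧ v = 1) ∨ (u = 1 ∧ v = 0))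
    (hA : ∀ u v, e.eval.Arc u v → u = 0 ∧ v = 2) :
    ¬ (e.eval.Edge 0 1 ∧ e.eval.Arc 0 2) := by
  have two : ∀ i j c : Fin 2, i ≠ j → c = i ∨ c = j := by decide
  induction e with
  | vertex w l => rintro ⟨h, -⟩; exact h
  | union a b iha ihb =>
      obtain ⟨wa, wb, hdisj⟩ := hWF
      rintro ⟨hEdge, hArc⟩
      have hEa : ∀ u v, a.eval.Edge u v → (u = 0 ∧ v = 1) ∨ (u = 1 ∧ v = 0) :=
        fun u v h => hE u v (Or.inl h)
      have hEb : ∀ u v, b.eval.Edge u v → (u = 0 ∧ v = 1) ∨ (u = 1 ∧ v = 0) :=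
        fun u v h => hE u v (Or.inr h)
      have hAa : ∀ u v, a.eval.Arc u v → u = 0 ∧ v = 2 := fun u v h => hA u v (Or.inl h)
      have hAb : ∀ u v, b.eval.Arc u v → u = 0 ∧ v = 2 := fun u v h => hA u v (Or.inr h)
      rcases hEdge with hea | heb <;> rcases hArc with haa | hab
      · exact iha wa hEa hAa ⟨hea, haa⟩
      · have h1 : (0 : Fin 3) ∈ a.eval.verts := ((a.mem_of_rel 0 1).1 hea).1
        have h2 : (0 : Fin 3) ∈ b.eval.verts := ((b.mem_of_rel 0 2).2 hab).1
        have : (0 : Fin 3) ∈ a.eval.verts ∩ b.eval.verts := ⟨h1, h2⟩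
        rw [hdisj] at this; exact this
      · have h1 : (0 : Fin 3) ∈ b.eval.verts := ((b.mem_of_rel 0 1).1 heb).1
        have h2 : (0 : Fin 3) ∈ a.eval.verts := ((a.mem_of_rel 0 2).2 haa).1
        have : (0 : Fin 3) ∈ a.eval.verts ∩ b.eval.verts := ⟨h2, h1⟩
        rw [hdisj] at this; exact this
      · exact ihb wb hEb hAb ⟨heb, hab⟩
  | eta i j a ih =>
      obtain ⟨wa, hij⟩ := hWF
      rintro ⟨hEdge, hArc⟩
      -- hArc : a.eval.Arc 0 2
      have h2mem : (2 : Fin 3) ∈ a.eval.verts := ((a.mem_of_rel 0 2).2 hArc).2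
      rcases hEdge with hea | ⟨h0, h1, hlab⟩
      · exact ih wa (fun u v h => hE u v (Or.inl h)) hA ⟨hea, hArc⟩
      · -- edge 0-1 added here: labels of 0,1 are {i,j}; label of 2 collides
        have hlab2 := two i j (a.eval.lab 2) hij
        rcases hlab with ⟨l0i, l1j⟩ | ⟨l0j, l1i⟩
        · rcases hlab2 with l2 | l2
          · -- lab 2 = i, lab 1 = j : edge 2-1
            have : ((2 : Fin 3) = 0 ∧ (1 : Fin 3) = 1) ∨ ((2 : Fin 3) = 1 ∧ (1 : Fin 3) = 0) :=
              hE 2 1 (Or.inr ⟨h2mem, h1, Or.inl ⟨l2, l1j⟩⟩)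
            simpa using this
          · -- lab 2 = j, lab 0 = i : edge 0-2
            have : ((0 : Fin 3) = 0 ∧ (2 : Fin 3) = 1) ∨ ((0 : Fin 3) = 1 ∧ (2 : Fin 3) = 0) :=
              hE 0 2 (Or.inr ⟨h0, h2mem, Or.inl ⟨l0i, l2⟩⟩)
            simpa using this
        · rcases hlab2 with l2 | l2
          · -- lab 2 = i, lab 0 = j : edge 2-0... use edge 0-2 with (j,i)
            have : ((0 : Fin 3) = 0 ∧ (2 : Fin 3) = 1) ∨ ((0 : Fin 3) = 1 ∧ (2 : Fin 3) = 0) :=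
              hE 0 2 (Or.inr ⟨h0, h2mem, Or.inr ⟨l0j, l2⟩⟩)
            simpa using this
          · -- lab 2 = j, lab 1 = i : edge 1-2? use edge 2-1 with (j,i)
            have : ((2 : Fin 3) = 0 ∧ (1 : Fin 3) = 1) ∨ ((2 : Fin 3) = 1 ∧ (1 : Fin 3) = 0) :=
              hE 2 1 (Or.inr ⟨h2mem, h1, Or.inr ⟨l2, l1i⟩⟩)
            simpa using this
  | alpha i j a ih =>
      obtain ⟨wa, hij⟩ := hWF
      rintro ⟨hEdge, hArc⟩
      -- hEdge : a.eval.Edge 0 1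
      have h1mem : (1 : Fin 3) ∈ a.eval.verts := ((a.mem_of_rel 0 1).1 hEdge).2
      rcases hArc with haa | ⟨h0, h2, l0, l2⟩
      · exact ih wa hE (fun u v h => hA u v (Or.inl h)) ⟨hEdge, haa⟩
      · have hlab1 := two i j (a.eval.lab 1) hij
        rcases hlab1 with l1 | l1
        · -- lab 1 = i : arc 1 → 2
          have : (1 : Fin 3) = 0 ∧ (2 : Fin 3) = 2 :=
            hA 1 2 (Or.inr ⟨h1mem, h2, l1, l2⟩)
          simpa using this
        · -- lab 1 = j : arc 0 → 1
          have : (0 : Fin 3) = 0 ∧ (1 : Fin 3) = 2 :=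
            hA 0 1 (Or.inr ⟨h0, h1mem, l0, l1⟩)
          simpa using this
  | relabel i j a ih => exact ih hWF hE hA

/-- One-label well-formed eta-free expressions produce no arcs. -/
lemma noarc {V : Type} (e : MCExpr (Fin 1) V) (hWF : e.WF) (hEF : e.EtaFree) :
    ∀ u v, ¬ e.eval.Arc u v := by
  induction e with
  | vertex w l => intro u v h; exact h
  | union a b iha ihb =>
      rintro u v (h | h)
      · exact iha hWF.1 hEF.1 u v h
      · exact ihb hWF.2.1 hEF.2 u v h
  | eta i j a ih => exact absurd hEF id
  | alpha i j a ih => exact absurd (Subsingleton.elim i j) hWF.2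
  | relabel i j a ih => exact ih hWF hEF

theorem stmt17 :
    (∃ e : MCExpr (Fin 3) (Fin 3),
      e.Builds (fun u v => (u = 0 ∧ v = 1) ∨ (u = 1 ∧ v = 0)) (fun u v => u = 0 ∧ v = 2)) ∧
    (¬ ∃ e : MCExpr (Fin 2) (Fin 3),
      e.Builds (fun u v => (u = 0 ∧ v = 1) ∨ (u = 1 ∧ v = 0)) (fun u v => u = 0 ∧ v = 2)) ∧
    (∃ e : MCExpr (Fin 2) (Fin 3), e.EtaFree ∧
      e.Builds (fun _ _ => False)
        (fun u v => (u = 0 ∧ v = 2) ∨ (u = 0 ∧ v = 1) ∨ (u = 1 ∧ v = 0))) ∧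
    (¬ ∃ e : MCExpr (Fin 1) (Fin 3), e.EtaFree ∧
      e.Builds (fun _ _ => False)
        (fun u v => (u = 0 ∧ v = 2) ∨ (u = 0 ∧ v = 1) ∨ (u = 1 ∧ v = 0))) := by
  refine ⟨?_, ?_, ?_, ?_⟩
  · -- part 1: explicit 3-label expression
    refine ⟨.alpha 0 2 (.eta 0 1 (.union (.union (.vertex 0 0) (.vertex 1 1)) (.vertex 2 2))),
      ?_, ?_, ?_, ?_⟩
    · refine ⟨⟨⟨⟨trivial, trivial, ?_⟩, trivial, ?_⟩, by decide⟩, by decide⟩ <;>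
        · ext x; simp [MCExpr.eval]
    · ext x; fin_cases x <;> simp [MCExpr.eval]
    · intro u v; fin_cases u <;> fin_cases v <;> simp [MCExpr.eval]
    · intro u v; fin_cases u <;> fin_cases v <;> simp [MCExpr.eval]
  · -- part 2: impossibility with 2 labels
    rintro ⟨e, hWF, -, hE, hA⟩
    exact nogo e hWF (fun u v h => (hE u v).mp h) (fun u v h => (hA u v).mp h)
      ⟨(hE 0 1).mpr (Or.inl ⟨rfl, rfl⟩), (hA 0 2).mpr ⟨rfl, rfl⟩⟩
  · -- part 3: directed expression with 2 labels
    refine ⟨.alpha 0 1 (.union (.alpha 1 0 (.union (.vertex 0 0) (.vertex 1 1)))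
        (.vertex 2 1)), ?_, ?_, ?_, ?_, ?_⟩
    · exact ⟨⟨trivial, trivial⟩, trivial⟩
    · refine ⟨⟨⟨⟨trivial, trivial, ?_⟩, by decide⟩, trivial, ?_⟩, by decide⟩ <;>
        · ext x; simp [MCExpr.eval]
    · ext x; fin_cases x <;> simp [MCExpr.eval]
    · intro u v; fin_cases u <;> fin_cases v <;> simp [MCExpr.eval]
    · intro u v; fin_cases u <;> fin_cases v <;> simp [MCExpr.eval]
  · -- part 4: impossibility with 1 label
    rintro ⟨e, hEF, hWF, -, -, hA⟩
    exact noarc e hWF hEF 0 2 ((hA 0 2).mpr (Or.inl ⟨rfl, rfl⟩))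
end

section
/- Given a mixed graph G without directed cycles, a proper type-endpoint preorder p, and any coloring c of G that corresponds to p, the coloring c violates no arc of G: for every arc (u,v) of G, c(u) < c(v). Conversely, every proper coloring of G corresponds to at least one proper type-endpoint preorder. -/
namespace MixedGraph

variable {V : Type}

/-- A type-endpoint preorder: each vertex gets two endpoints, which are constant
on mixed neighborhood types and satisfy `pm v < pp v`. -/
def IsTypeEndpointPreorder (G : MixedGraph V) (pm pp : V → ℕ) : Prop :=
  (∀ v, pm v < pp v) ∧ ∀ u v, G.SameType u v → pm u = pm v ∧ pp u = pp v

/-- A proper type-endpoint preorder: for every arc, the upper endpoint of the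
source type is at most the lower endpoint of the target type. -/
def ProperPreorder (G : MixedGraph V) (pm pp : V → ℕ) : Prop :=
  ∀ u v, G.Arc u v → pp u ≤ pm v

/-- A coloring corresponds to a type-endpoint preorder: there is an ascending
sequence of colors such that each vertex's color lies in the half-open interval
determined by its type endpoints. -/
def Corresponds (G : MixedGraph V) (c : V → ℕ) (pm pp : V → ℕ) : Prop :=
  ∃ seq : ℕ → ℕ, StrictMono seq ∧ ∀ v, seq (pm v) ≤ c v ∧ c v < seq (pp v)

end MixedGraph

theorem stmt19 {V : Type} [Fintype V] [Nonempty V] (G : MixedGraph V) (hG : G.Acyclic) :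
    (∀ (pm pp : V → ℕ) (c : V → ℕ), G.IsTypeEndpointPreorder pm pp → G.ProperPreorder pm pp →
      G.Corresponds c pm pp → ∀ u v, G.Arc u v → c u < c v) ∧
    (∀ c : V → ℕ, G.ProperColoring c →
      ∃ pm pp : V → ℕ, G.IsTypeEndpointPreorder pm pp ∧ G.ProperPreorder pm pp ∧
        G.Corresponds c pm pp) := by
  constructor
  · rintro pm pp c _hT hP ⟨seq, hmono, hseq⟩ u v huv
    calc c u < seq (pp u) := (hseq u).2
      _ ≤ seq (pm v) := hmono.monotone (hP u v huv)
      _ ≤ c v := (hseq v).1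
  · intro c hc
    classical
    set T : V → V → Prop := fun u v => G.Nminus u = G.Nminus v ∧ G.Nplus u = G.Nplus v with hT
    have hTrefl : ∀ v, T v v := fun v => ⟨rfl, rfl⟩
    have cls : V → Finset ℕ := fun v => (Finset.univ.filter (fun w => T w v)).image c
    set cls : V → Finset ℕ := fun v => (Finset.univ.filter (fun w => T w v)).image c with hcls
    have hne : ∀ v, (cls v).Nonempty := fun v =>
      ⟨c v, Finset.mem_image_of_mem c (Finset.mem_filter.mpr ⟨Finset.mem_univ v, hTrefl v⟩)⟩
    refine ⟨fun v => (cls v).min' (hne v), fun v => (cls v).max' (hne v) + 1, ?_, ?_, ?_⟩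
    · -- IsTypeEndpointPreorder
      have hcong : ∀ u v, T u v → cls u = cls v := by
        intro u v huv
        simp only [hcls]
        congr 1
        apply Finset.filter_congr
        intro w _
        constructor
        · rintro ⟨h1, h2⟩; exact ⟨h1.trans huv.1, h2.trans huv.2⟩
        · rintro ⟨h1, h2⟩; exact ⟨h1.trans huv.1.symm, h2.trans huv.2.symm⟩
      constructor
      · intro v
        have := Finset.min'_le (cls v) (c v)
          (Finset.mem_image_of_mem c (Finset.mem_filter.mpr ⟨Finset.mem_univ v, hTrefl v⟩))
        have h2 := Finset.le_max' (cls v) (c v)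
          (Finset.mem_image_of_mem c (Finset.mem_filter.mpr ⟨Finset.mem_univ v, hTrefl v⟩))
        dsimp only; omega
      · intro u v huv
        have h := hcong u v ⟨huv.1, huv.2.1⟩
        constructor <;> simp [h]
    · -- ProperPreorder
      intro u v huv
      have key : ∀ a ∈ cls u, ∀ b ∈ cls v, a < b := by
        intro a ha b hb
        simp only [hcls, Finset.mem_image, Finset.mem_filter] at ha hb
        obtain ⟨u', ⟨_, hu'⟩, rfl⟩ := ha
        obtain ⟨v', ⟨_, hv'⟩, rfl⟩ := hb
        have h1 : G.Arc u' v := by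
          have : v ∈ G.Nplus u' := by rw [hu'.2]; exact huv
          exact this
        have h2 : G.Arc u' v' := by
          have : u' ∈ G.Nminus v' := by rw [hv'.1]; exact h1
          exact this
        exact hc.2 u' v' h2
      have := key ((cls u).max' (hne u)) (Finset.max'_mem _ _)
        ((cls v).min' (hne v)) (Finset.min'_mem _ _)
      dsimp only; omega
    · -- Corresponds
      refine ⟨id, strictMono_id, fun v => ?_⟩
      have hmem : c v ∈ cls v :=
        Finset.mem_image_of_mem c (Finset.mem_filter.mpr ⟨Finset.mem_univ v, hTrefl v⟩)
      have h1 := Finset.min'_le (cls v) (c v) hmem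
      have h2 := Finset.le_max' (cls v) (c v) hmem
      simp only [id]
      omega
end
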